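/- Let N ≥ 1 be an integer and π ∈ [0,1]^N. Let B be the unique solution of the equilibrium drift system with data (π, b) and B′ the unique solution with data (π, b′), for b, b′ ∈ ℝ^N. Then for every i ∈ {1,…,N}: |B^i − B′^i| ≤ |b^i − b′^i| + (1/N)·Σ_{j=1}^N |b^j − b′^j|. -/

import Mathlib

open Finset

/-- Stability of the equilibrium drift system with respect to the data `b`:
if `B` and `B'` solve the system with data `(π, b)` and `(π, b')` respectively,
then `|B^i - B'^i| ≤ |b^i - b'^i| + (1/N) ∑_j |b^j - b'^j|`. -/
theorem equilibrium_drift_system_stability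
    (N : ℕ) (hN : 1 ≤ N) (π b b' : Fin N → ℝ)
    (hπ : ∀ i, π i ∈ Set.Icc (0 : ℝ) 1)
    (B B' : Fin N → ℝ)
    (hB : ∀ i, B i = (1 / (N : ℝ)) * ∑ j, π j * B j - π i * B i + b i)
    (hB' : ∀ i, B' i = (1 / (N : ℝ)) * ∑ j, π j * B' j - π i * B' i + b' i) :
    ∀ i, |B i - B' i| ≤ |b i - b' i| + (1 / (N : ℝ)) * ∑ j, |b j - b' j| := by
  have hNpos : (0 : ℝ) < N := by exact_mod_cast hN
  set D : Fin N → ℝ := fun j => B j - B' j with hD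
  set d : Fin N → ℝ := fun j => b j - b' j with hd
  have hπpos : ∀ j, (0 : ℝ) < 1 + π j := fun j => by
    have := (hπ j).1; linarith
  have hsum : ∑ j, π j * D j = ∑ j, π j * B j - ∑ j, π j * B' j := by
    simp [hD, mul_sub, Finset.sum_sub_distrib]
  set S : ℝ := (1 / (N : ℝ)) * ∑ j, π j * D j with hS
  have key : ∀ j, (1 + π j) * D j = S + d j := by
    intro j
    have h1 := hB j
    have h2 := hB' j
    simp only [hS, hsum, hd, hD]
    ring_nf
    ring_nf at h1 h2
    rw [Finset.sum_sub_distrib]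
    linarith
  -- c j := π j / (1 + π j)
  set c : Fin N → ℝ := fun j => π j / (1 + π j) with hc
  have hcD : ∀ j, π j * D j = c j * (S + d j) := by
    intro j
    have hne := (hπpos j).ne'
    have hDj : D j = (S + d j) / (1 + π j) := by
      rw [eq_div_iff hne]
      linarith [key j]
    rw [hDj, hc]
    field_simp
  have hcle : ∀ j, c j ≤ 1/2 := by
    intro j
    have h0 := (hπ j).1
    have h1 := (hπ j).2
    rw [hc, div_le_iff₀ (hπpos j)]
    linarith
  have hc0 : ∀ j, 0 ≤ c j := fun j => div_nonneg (hπ j).1 (hπpos j).le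
  set m : ℝ := (1 / (N : ℝ)) * ∑ j, c j with hm
  have hmle : m ≤ 1/2 := by
    rw [hm]
    have h1 : ∑ j, c j ≤ ∑ j : Fin N, (1/2 : ℝ) := Finset.sum_le_sum (fun j _ => hcle j)
    have h2 : ∑ j : Fin N, (1/2 : ℝ) = N * (1/2) := by
      simp [Finset.sum_const, Finset.card_univ, mul_comm]
    rw [div_mul_eq_mul_div, one_mul, div_le_iff₀ hNpos]
    calc ∑ j, c j ≤ N * (1/2) := by rw [← h2]; exact h1
      _ = 1/2 * N := by ring
  have hSeq : S * (1 - m) = (1 / (N : ℝ)) * ∑ j, c j * d j := by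
    have h3 : S = (1 / (N : ℝ)) * ∑ j, (c j * S + c j * d j) := by
      rw [hS]
      congr 1
      exact Finset.sum_congr rfl (fun j _ => by rw [hcD j]; ring)
    rw [Finset.sum_add_distrib, ← Finset.sum_mul] at h3
    rw [hm]
    nlinarith [h3]
  set T : ℝ := (1 / (N : ℝ)) * ∑ j, |d j| with hT
  have hT0 : 0 ≤ T := by
    rw [hT]
    apply mul_nonneg (by positivity)
    exact Finset.sum_nonneg (fun j _ => abs_nonneg _)
  have hSbound : |S| ≤ T := by
    have habs : |∑ j, c j * d j| ≤ ∑ j, (1/2) * |d j| := by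
      refine (Finset.abs_sum_le_sum_abs _ _).trans (Finset.sum_le_sum fun j _ => ?_)
      rw [abs_mul, abs_of_nonneg (hc0 j)]
      exact mul_le_mul_of_nonneg_right (hcle j) (abs_nonneg _)
    have hhalf : ∑ j, (1/2 : ℝ) * |d j| = (1/2) * ∑ j, |d j| := by
      rw [Finset.mul_sum]
    rw [hhalf] at habs
    have hstep : |S| * (1 - m) ≤ 1 / (N : ℝ) * (1/2 * ∑ j, |d j|) := by
      have h4 : |S * (1 - m)| ≤ 1 / (N : ℝ) * (1/2 * ∑ j, |d j|) := by
        rw [hSeq, abs_mul, abs_of_pos (by positivity : (0:ℝ) < 1 / (N:ℝ))]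
        exact mul_le_mul_of_nonneg_left habs (by positivity)
      calc |S| * (1 - m) ≤ |S * (1 - m)| := by
            rw [abs_mul S (1 - m)]
            exact mul_le_mul_of_nonneg_left (le_abs_self (1 - m)) (abs_nonneg S)
        _ ≤ _ := h4
    have hTeq : 1 / (N : ℝ) * (1/2 * ∑ j, |d j|) = T / 2 := by rw [hT]; ring
    rw [hTeq] at hstep
    have hm2 : (1:ℝ)/2 ≤ 1 - m := by linarith
    nlinarith [abs_nonneg S, hT0, hm2, hstep]
  intro i
  have hDi : (1 + π i) * D i = S + d i := key i
  have h5 : |D i| ≤ (1 + π i) * |D i| := by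
    nlinarith [abs_nonneg (D i), (hπ i).1]
  have h6 : |D i| ≤ |d i| + T := by
    calc |D i| ≤ (1 + π i) * |D i| := h5
      _ = |(1 + π i) * D i| := by rw [abs_mul, abs_of_pos (hπpos i)]
      _ = |S + d i| := by rw [hDi]
      _ ≤ |S| + |d i| := abs_add_le _ _
      _ ≤ |d i| + T := by linarith
  simpa [hD, hd, hT] using h6
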